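/- Let a, b, c be integers with a ≠ 0 or b ≠ 0. Let x₀, y₀ be integers with a·x₀ + b·y₀ = gcd(a,b). Define the 2×2 integer matrix T with columns ( (c/gcd(a,b,c))·x₀, (c/gcd(a,b,c))·y₀ ) and ( −b/gcd(a,b), a/gcd(a,b) ). Then the image of ℤ² under T equals { (x,y) ∈ ℤ² : c ∣ a·x + b·y }. -/

import Mathlib

open Matrix

theorem range_mulVec_eq_dvd_set (a b c : ℤ) (hab : a ≠ 0 ∨ b ≠ 0)
    (x₀ y₀ : ℤ) (hbez : a * x₀ + b * y₀ = Int.gcd a b)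
    (T : Matrix (Fin 2) (Fin 2) ℤ)
    (hT : T = !![(c / Int.gcd (Int.gcd a b) c) * x₀, -b / Int.gcd a b;
                 (c / Int.gcd (Int.gcd a b) c) * y₀,  a / Int.gcd a b]) :
    Set.range T.mulVec = {v : Fin 2 → ℤ | c ∣ a * v 0 + b * v 1} := by
  subst hT
  set g : ℤ := (Int.gcd a b : ℤ) with hgdef
  set d : ℤ := (Int.gcd g c : ℤ) with hddef
  have hgn : Int.gcd a b ≠ 0 := by
    rw [Ne, Int.gcd_eq_zero_iff]; tauto
  have hg0 : g ≠ 0 := Int.natCast_ne_zero.mpr hgn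
  have hga : g ∣ a := Int.gcd_dvd_left a b
  have hgb : g ∣ b := Int.gcd_dvd_right a b
  have hdg : d ∣ g := Int.gcd_dvd_left g c
  have hdc : d ∣ c := Int.gcd_dvd_right g c
  have hd0 : d ≠ 0 := by
    rw [hddef, Ne, Int.natCast_eq_zero, Int.gcd_eq_zero_iff]
    exact fun h => hg0 h.1
  set A' : ℤ := a / g with hA'def
  set B' : ℤ := b / g with hB'def
  set C' : ℤ := c / d with hC'def
  set G' : ℤ := g / d with hG'def
  have hA : A' * g = a := Int.ediv_mul_cancel hga
  have hB : B' * g = b := Int.ediv_mul_cancel hgb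
  have hC : C' * d = c := Int.ediv_mul_cancel hdc
  have hG : G' * d = g := Int.ediv_mul_cancel hdg
  have hneg : -b / g = -B' := Int.neg_ediv_of_dvd hgb
  have hbez' : A' * x₀ + B' * y₀ = 1 := by
    have h : (A' * x₀ + B' * y₀) * g = 1 * g := by
      rw [one_mul]; linear_combination x₀ * hA + y₀ * hB + hbez
    exact mul_right_cancel₀ hg0 h
  have hcop : IsCoprime C' G' := by
    rw [Int.isCoprime_iff_gcd_eq_one]
    have hpos : 0 < Int.gcd g c := Nat.pos_of_ne_zero (by
      rw [Ne, Int.gcd_eq_zero_iff]; exact fun h => hg0 h.1)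
    have := Int.gcd_div_gcd_div_gcd (i := g) (j := c) hpos
    rw [Int.gcd_comm] at this
    exact this
  ext v
  simp only [Set.mem_range, Set.mem_setOf_eq]
  constructor
  · rintro ⟨w, rfl⟩
    refine ⟨G' * w 0, ?_⟩
    simp only [Matrix.mulVec, dotProduct, Fin.sum_univ_two, Matrix.cons_val',
      Matrix.cons_val_zero, Matrix.cons_val_one, Matrix.head_cons, Matrix.empty_val',
      Matrix.cons_val_fin_one, Matrix.head_fin_const, hneg]
    calc a * (C' * x₀ * w 0 + -B' * w 1) + b * (C' * y₀ * w 0 + A' * w 1)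
        = g * (C' * w 0) * (A' * x₀ + B' * y₀) := by
          rw [← hA, ← hB]; ring
      _ = g * C' * w 0 := by rw [hbez']; ring
      _ = c * (G' * w 0) := by rw [← hG, ← hC]; ring
  · rintro ⟨k, hk⟩
    have h1 : d * (G' * (A' * v 0 + B' * v 1)) = d * (C' * k) := by
      have : g * (A' * v 0 + B' * v 1) = c * k := by
        rw [← hk, ← hA, ← hB]; ring
      rw [← hG, ← hC] at this; linarith [this]
    have h2 : G' * (A' * v 0 + B' * v 1) = C' * k := mul_left_cancel₀ hd0 h1
    have h3 : C' ∣ A' * v 0 + B' * v 1 :=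
      hcop.dvd_of_dvd_mul_left ⟨k, h2⟩
    obtain ⟨s, hs⟩ := h3
    have hu : A' * (s * C' * x₀ - v 0) = B' * (v 1 - s * C' * y₀) := by
      linear_combination s * C' * hbez' - hs
    set t : ℤ := x₀ * (v 1 - s * C' * y₀) + y₀ * (s * C' * x₀ - v 0) with htdef
    have ht0 : B' * t = s * C' * x₀ - v 0 := by
      rw [htdef]; linear_combination (s * C' * x₀ - v 0) * hbez' - x₀ * hu
    have ht1 : A' * t = v 1 - s * C' * y₀ := by
      rw [htdef]; linear_combination (v 1 - s * C' * y₀) * hbez' + y₀ * hu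
    refine ⟨![s, t], ?_⟩
    funext i
    fin_cases i
    · show _ = v 0
      simp [Matrix.mulVec, dotProduct, Fin.sum_univ_two, Fin.zero_eta, hneg]
      linear_combination -ht0
    · show _ = v 1
      simp [Matrix.mulVec, dotProduct, Fin.sum_univ_two, Fin.mk_one, hneg]
      linear_combination ht1
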